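/- For every n ≥ 1 and all a₁,…,aₙ ∈ A: Σ tr(L_{a₁⁽¹⁾a₂⁽¹⁾⋯aₙ⁽¹⁾}) · tr(L_{a₁⁽²⁾a₂⁽²⁾⋯aₙ⁽²⁾}) = dim_ℂ(A) · tr(L_{a₁a₂⋯aₙ}), where the sum is over the Sweedler expansions Δ(a_i) = Σ a_i⁽¹⁾ ⊗ a_i⁽²⁾ of each of the n arguments. (In components this is the relation |X|^{-1} C_{x₁⋯xₙ} C_{y₁⋯yₙ} Δ_{z₁}{}^{x₁y₁} ⋯ Δ_{zₙ}{}^{xₙyₙ} = C_{z₁⋯zₙ}.) -/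

import Mathlib

open TensorProduct Coalgebra

/-- The linear functional `a ↦ tr(L_a)` (trace of left multiplication by `a`). -/
noncomputable def traceLmul (A : Type*) [Ring A] [Algebra ℂ A] : A →ₗ[ℂ] ℂ :=
  (LinearMap.trace ℂ A) ∘ₗ (LinearMap.mul ℂ A)

/-- The linear functional on `A ⊗ A` sending `x ⊗ y` to `tr(L_x) · tr(L_y)`. -/
noncomputable def traceLmulTensor (A : Type*) [Ring A] [Algebra ℂ A] :
    A ⊗[ℂ] A →ₗ[ℂ] ℂ :=
  LinearMap.mul' ℂ ℂ ∘ₗ TensorProduct.map (traceLmul A) (traceLmul A)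

section Aux

variable (A : Type*) [Ring A] [HopfAlgebra ℂ A]

/-- `ψ(u ⊗ v) = Δ(u) * (1 ⊗ v)`. -/
noncomputable def psiMap : A ⊗[ℂ] A →ₗ[ℂ] A ⊗[ℂ] A :=
  (LinearMap.mul' ℂ (A ⊗[ℂ] A)) ∘ₗ
    TensorProduct.map (comul (R := ℂ)) (TensorProduct.mk ℂ A A 1)

/-- `φ(u ⊗ v) = ((1 ⊗ S)Δ(u)) * (1 ⊗ v)`. -/
noncomputable def phiMap : A ⊗[ℂ] A →ₗ[ℂ] A ⊗[ℂ] A :=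
  (LinearMap.mul' ℂ (A ⊗[ℂ] A)) ∘ₗ
    TensorProduct.map ((HopfAlgebra.antipode (R := ℂ)).lTensor A ∘ₗ comul (R := ℂ))
      (TensorProduct.mk ℂ A A 1)

variable {A}

lemma psiMap_tmul (u v : A) :
    psiMap A (u ⊗ₜ[ℂ] v) = comul (R := ℂ) u * ((1 : A) ⊗ₜ[ℂ] v) := by
  simp [psiMap, LinearMap.mul'_apply]

lemma phiMap_tmul (u v : A) :
    phiMap A (u ⊗ₜ[ℂ] v) =
      (HopfAlgebra.antipode (R := ℂ)).lTensor A (comul (R := ℂ) u) * ((1 : A) ⊗ₜ[ℂ] v) := by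
  simp [phiMap, LinearMap.mul'_apply]

lemma sum_smul_counit {u : A} (r : Coalgebra.Repr ℂ u (A × A)) :
    ∑ i ∈ r.index, counit (R := ℂ) (r.right i) • r.left i = u := by
  have h := sum_tmul_counit_eq r
  apply_fun (TensorProduct.rid ℂ A) at h
  simp only [map_sum, TensorProduct.rid_tmul, one_smul] at h
  exact h

lemma psi_phi (u v : A) : psiMap A (phiMap A (u ⊗ₜ[ℂ] v)) = u ⊗ₜ[ℂ] v := by
  set S : A →ₗ[ℂ] A := HopfAlgebra.antipode (R := ℂ) with hS
  set r := ℛ ℂ u with hr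
  set a₁ : (i : A × A) → Coalgebra.Repr ℂ (r.left i) (A × A) := fun i => ℛ ℂ (r.left i) with ha₁
  set a₂ : (i : A × A) → Coalgebra.Repr ℂ (r.right i) (A × A) := fun i => ℛ ℂ (r.right i) with ha₂
  have h1 : phiMap A (u ⊗ₜ[ℂ] v) = ∑ i ∈ r.index, r.left i ⊗ₜ[ℂ] (S (r.right i) * v) := by
    rw [phiMap_tmul, ← r.eq]
    simp [hS, Finset.sum_mul, Algebra.TensorProduct.tmul_mul_tmul]
  have h2 : psiMap A (phiMap A (u ⊗ₜ[ℂ] v)) =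
      ∑ i ∈ r.index, ∑ j ∈ (a₁ i).index,
        (a₁ i).left j ⊗ₜ[ℂ] ((a₁ i).right j * (S (r.right i) * v)) := by
    rw [h1, map_sum]
    refine Finset.sum_congr rfl fun i _ => ?_
    rw [psiMap_tmul, ← (a₁ i).eq]
    simp [Finset.sum_mul, Algebra.TensorProduct.tmul_mul_tmul]
  -- the linear map used to transport coassociativity
  set G : A ⊗[ℂ] (A ⊗[ℂ] A) →ₗ[ℂ] A ⊗[ℂ] A :=
    LinearMap.lTensor A
      (LinearMap.mulRight ℂ v ∘ₗ LinearMap.mul' ℂ A ∘ₗ LinearMap.lTensor A S) with hG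
  have key := congrArg G (sum_tmul_tmul_eq r a₁ a₂)
  have hGl : G (∑ i ∈ r.index, ∑ j ∈ (a₁ i).index,
      (a₁ i).left j ⊗ₜ[ℂ] ((a₁ i).right j ⊗ₜ[ℂ] r.right i)) =
      ∑ i ∈ r.index, ∑ j ∈ (a₁ i).index,
        (a₁ i).left j ⊗ₜ[ℂ] ((a₁ i).right j * (S (r.right i) * v)) := by
    simp [hG, mul_assoc]
  have hGr : G (∑ i ∈ r.index, ∑ j ∈ (a₂ i).index,
      r.left i ⊗ₜ[ℂ] ((a₂ i).left j ⊗ₜ[ℂ] (a₂ i).right j)) =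
      ∑ i ∈ r.index, r.left i ⊗ₜ[ℂ] (counit (R := ℂ) (r.right i) • v) := by
    rw [map_sum]
    refine Finset.sum_congr rfl fun i _ => ?_
    rw [map_sum]
    simp only [hG, LinearMap.lTensor_tmul, LinearMap.coe_comp, Function.comp_apply,
      LinearMap.lTensor_tmul, LinearMap.mul'_apply, LinearMap.mulRight_apply]
    rw [← TensorProduct.tmul_sum, ← Finset.sum_mul, hS, HopfAlgebra.sum_mul_antipode_eq_algebraMap_counit (a₂ i),
      ← Algebra.smul_def]
  have := hGl.symm.trans (key.trans hGr)
  rw [h2, this]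
  simp_rw [← TensorProduct.smul_tmul]
  rw [← TensorProduct.sum_tmul, sum_smul_counit r]

lemma phi_psi (u v : A) : phiMap A (psiMap A (u ⊗ₜ[ℂ] v)) = u ⊗ₜ[ℂ] v := by
  set S : A →ₗ[ℂ] A := HopfAlgebra.antipode (R := ℂ) with hS
  set r := ℛ ℂ u with hr
  set a₁ : (i : A × A) → Coalgebra.Repr ℂ (r.left i) (A × A) := fun i => ℛ ℂ (r.left i) with ha₁
  set a₂ : (i : A × A) → Coalgebra.Repr ℂ (r.right i) (A × A) := fun i => ℛ ℂ (r.right i) with ha₂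
  have h1 : psiMap A (u ⊗ₜ[ℂ] v) = ∑ i ∈ r.index, r.left i ⊗ₜ[ℂ] (r.right i * v) := by
    rw [psiMap_tmul, ← r.eq]
    simp [Finset.sum_mul, Algebra.TensorProduct.tmul_mul_tmul]
  have h2 : phiMap A (psiMap A (u ⊗ₜ[ℂ] v)) =
      ∑ i ∈ r.index, ∑ j ∈ (a₁ i).index,
        (a₁ i).left j ⊗ₜ[ℂ] (S ((a₁ i).right j) * (r.right i * v)) := by
    rw [h1, map_sum]
    refine Finset.sum_congr rfl fun i _ => ?_
    rw [phiMap_tmul, ← (a₁ i).eq]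
    simp [hS, Finset.sum_mul, Algebra.TensorProduct.tmul_mul_tmul]
  set G : A ⊗[ℂ] (A ⊗[ℂ] A) →ₗ[ℂ] A ⊗[ℂ] A :=
    LinearMap.lTensor A
      (LinearMap.mulRight ℂ v ∘ₗ LinearMap.mul' ℂ A ∘ₗ LinearMap.rTensor A S) with hG
  have key := congrArg G (sum_tmul_tmul_eq r a₁ a₂)
  have hGl : G (∑ i ∈ r.index, ∑ j ∈ (a₁ i).index,
      (a₁ i).left j ⊗ₜ[ℂ] ((a₁ i).right j ⊗ₜ[ℂ] r.right i)) =
      ∑ i ∈ r.index, ∑ j ∈ (a₁ i).index,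
        (a₁ i).left j ⊗ₜ[ℂ] (S ((a₁ i).right j) * (r.right i * v)) := by
    simp [hG, mul_assoc]
  have hGr : G (∑ i ∈ r.index, ∑ j ∈ (a₂ i).index,
      r.left i ⊗ₜ[ℂ] ((a₂ i).left j ⊗ₜ[ℂ] (a₂ i).right j)) =
      ∑ i ∈ r.index, r.left i ⊗ₜ[ℂ] (counit (R := ℂ) (r.right i) • v) := by
    rw [map_sum]
    refine Finset.sum_congr rfl fun i _ => ?_
    rw [map_sum]
    simp only [hG, LinearMap.lTensor_tmul, LinearMap.coe_comp, Function.comp_apply,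
      LinearMap.rTensor_tmul, LinearMap.mul'_apply, LinearMap.mulRight_apply]
    rw [← TensorProduct.tmul_sum, ← Finset.sum_mul, hS, HopfAlgebra.sum_antipode_mul_eq_algebraMap_counit (a₂ i),
      ← Algebra.smul_def]
  have := hGl.symm.trans (key.trans hGr)
  rw [h2, this]
  simp_rw [← TensorProduct.smul_tmul]
  rw [← TensorProduct.sum_tmul, sum_smul_counit r]

lemma psi_comp_phi : psiMap A ∘ₗ phiMap A = LinearMap.id :=
  TensorProduct.ext' fun u v => psi_phi u v

lemma phi_comp_psi : phiMap A ∘ₗ psiMap A = LinearMap.id :=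
  TensorProduct.ext' fun u v => phi_psi u v

/-- The intertwining relation `L_{Δx} ∘ ψ = ψ ∘ (L_x ⊗ id)`. -/
lemma mul_comul_comp_psi (x : A) :
    LinearMap.mul ℂ (A ⊗[ℂ] A) (comul (R := ℂ) x) ∘ₗ psiMap A =
      psiMap A ∘ₗ TensorProduct.map (LinearMap.mul ℂ A x) LinearMap.id := by
  refine TensorProduct.ext' fun u v => ?_
  simp only [LinearMap.coe_comp, Function.comp_apply, TensorProduct.map_tmul,
    LinearMap.mul_apply', LinearMap.id_coe, id_eq, psiMap_tmul]
  rw [← mul_assoc, ← Bialgebra.comul_mul]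

lemma mul_tmul_eq_map (x y : A) :
    LinearMap.mul ℂ (A ⊗[ℂ] A) (x ⊗ₜ[ℂ] y) =
      TensorProduct.map (LinearMap.mul ℂ A x) (LinearMap.mul ℂ A y) :=
  TensorProduct.ext' fun u v => by
    simp [LinearMap.mul_apply', Algebra.TensorProduct.tmul_mul_tmul]

variable [Module.Finite ℂ A]

lemma traceLmulTensor_eq (t : A ⊗[ℂ] A) :
    traceLmulTensor A t = LinearMap.trace ℂ (A ⊗[ℂ] A) (LinearMap.mul ℂ (A ⊗[ℂ] A) t) := by
  induction t using TensorProduct.induction_on with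
  | zero => simp
  | tmul x y =>
      rw [mul_tmul_eq_map, LinearMap.trace_tensorProduct']
      simp [traceLmulTensor, traceLmul]
  | add s t hs ht => simp [map_add, hs, ht]

lemma trace_comul (b : A) :
    traceLmulTensor A (comul (R := ℂ) b) =
      (Module.finrank ℂ A : ℂ) * traceLmul A b := by
  rw [traceLmulTensor_eq]
  have h1 : LinearMap.mul ℂ (A ⊗[ℂ] A) (comul (R := ℂ) b) =
      psiMap A ∘ₗ (TensorProduct.map (LinearMap.mul ℂ A b) LinearMap.id ∘ₗ phiMap A) := by
    calc LinearMap.mul ℂ (A ⊗[ℂ] A) (comul (R := ℂ) b)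
        = (LinearMap.mul ℂ (A ⊗[ℂ] A) (comul (R := ℂ) b) ∘ₗ psiMap A) ∘ₗ phiMap A := by
          rw [LinearMap.comp_assoc, psi_comp_phi, LinearMap.comp_id]
      _ = (psiMap A ∘ₗ TensorProduct.map (LinearMap.mul ℂ A b) LinearMap.id) ∘ₗ phiMap A := by
          rw [mul_comul_comp_psi]
      _ = _ := by rw [LinearMap.comp_assoc]
  rw [h1, LinearMap.trace_comp_comm', LinearMap.comp_assoc, phi_comp_psi,
    LinearMap.comp_id, LinearMap.trace_tensorProduct']
  simp [traceLmul, mul_comm]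

end Aux

/-- For every `n ≥ 1` and all `a₁, …, aₙ ∈ A`:
`Σ tr(L_{a₁⁽¹⁾⋯aₙ⁽¹⁾}) · tr(L_{a₁⁽²⁾⋯aₙ⁽²⁾}) = dim A · tr(L_{a₁⋯aₙ})`,
the sum being over the Sweedler expansions of each argument; here the left-hand
side is the functional `x ⊗ y ↦ tr(L_x)·tr(L_y)` applied to the product
`Δ(a₁)Δ(a₂)⋯Δ(aₙ)` in `A ⊗ A`.  (In components this is
`|X|⁻¹ C_{x₁⋯xₙ} C_{y₁⋯yₙ} Δ_{z₁}{}^{x₁y₁} ⋯ Δ_{zₙ}{}^{xₙyₙ} = C_{z₁⋯zₙ}`.) -/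
theorem trace_comul_prod
    (A : Type*) [Ring A] [HopfAlgebra ℂ A] [Module.Finite ℂ A]
    (hinv : ∀ a : A, HopfAlgebra.antipode (R := ℂ) (HopfAlgebra.antipode (R := ℂ) a) = a) :
    ∀ (n : ℕ), 1 ≤ n → ∀ (a : Fin n → A),
      traceLmulTensor A
          ((List.ofFn (fun i => (comul (R := ℂ) (a i) : A ⊗[ℂ] A))).prod)
        = (Module.finrank ℂ A : ℂ) * traceLmul A ((List.ofFn a).prod) := by
  intro n hn a
  have hprod : (List.ofFn (fun i => (comul (R := ℂ) (a i) : A ⊗[ℂ] A))).prod =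
      comul (R := ℂ) ((List.ofFn a).prod) := by
    have : (fun i => (comul (R := ℂ) (a i) : A ⊗[ℂ] A)) =
        (Bialgebra.comulAlgHom ℂ A) ∘ a := rfl
    rw [this, ← List.map_ofFn, ← map_list_prod (Bialgebra.comulAlgHom ℂ A)]
    rfl
  rw [hprod, trace_comul]
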